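/- arXiv:2510.26948 — 2 statements merged into one kernel-verified Lean document; each statement's English description precedes it below -/
import Mathlib

section
/- Let V : [t₀, T) → ℝ be differentiable and nonnegative, let a : [t₀, T) → ℝ be differentiable and positive with a'(t)/a(t) > 0, and let b > 0. If V'(t) ≤ −b·V(t) − 2·(a'(t)/a(t))·V(t) for all t ∈ [t₀, T), then for all t ∈ [t₀, T), V(t) ≤ a(t)^(−2) · exp(−b·(t − t₀)) · a(t₀)² · V(t₀). -/
theorem prescribed_time_comparison
    (t₀ T b : ℝ) (hb : 0 < b) (ht : t₀ < T)
    (V V' a a' : ℝ → ℝ)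
    (hV : ∀ t ∈ Set.Ico t₀ T, HasDerivAt V (V' t) t)
    (hVnn : ∀ t ∈ Set.Ico t₀ T, 0 ≤ V t)
    (ha : ∀ t ∈ Set.Ico t₀ T, HasDerivAt a (a' t) t)
    (hapos : ∀ t ∈ Set.Ico t₀ T, 0 < a t)
    (haratio : ∀ t ∈ Set.Ico t₀ T, 0 < a' t / a t)
    (hineq : ∀ t ∈ Set.Ico t₀ T, V' t ≤ -b * V t - 2 * (a' t / a t) * V t) :
    ∀ t ∈ Set.Ico t₀ T,
      V t ≤ (a t) ^ (-2 : ℤ) * Real.exp (-b * (t - t₀)) * (a t₀) ^ 2 * V t₀ := by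
  intro t htmem
  obtain ⟨ht0, htT⟩ := htmem
  set g : ℝ → ℝ := fun s => V s * (a s) ^ 2 * Real.exp (b * (s - t₀)) with hg
  -- derivative of g at any point of Ico t₀ T
  have hgderiv : ∀ x ∈ Set.Ico t₀ T, HasDerivAt g
      ((V' x * (a x) ^ 2 + V x * (2 * a x ^ 1 * a' x)) * Real.exp (b * (x - t₀))
        + (V x * (a x) ^ 2) * (Real.exp (b * (x - t₀)) * b)) x := by
    intro x hx
    have h2 : HasDerivAt (fun s => (a s) ^ 2) (2 * a x ^ 1 * a' x) x := by
      simpa using (ha x hx).fun_pow 2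
    have h3 : HasDerivAt (fun s => Real.exp (b * (s - t₀)))
        (Real.exp (b * (x - t₀)) * b) x := by
      have : HasDerivAt (fun s => b * (s - t₀)) b x := by
        simpa using ((hasDerivAt_id x).sub_const t₀).const_mul b
      simpa using this.exp
    exact ((hV x hx).mul h2).mul h3
  have hsub : Set.Icc t₀ t ⊆ Set.Ico t₀ T := fun y hy =>
    ⟨hy.1, lt_of_le_of_lt hy.2 htT⟩
  -- g is antitone on Icc t₀ t
  have hanti : AntitoneOn g (Set.Icc t₀ t) := by
    apply antitoneOn_of_deriv_nonpos (convex_Icc _ _)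
    · exact fun y hy => ((hgderiv y (hsub hy)).continuousAt).continuousWithinAt
    · intro y hy
      rw [interior_Icc] at hy
      exact ((hgderiv y (hsub ⟨le_of_lt hy.1, le_of_lt hy.2⟩)).differentiableAt).differentiableWithinAt
    · intro y hy
      rw [interior_Icc] at hy
      have hymem : y ∈ Set.Ico t₀ T := hsub ⟨le_of_lt hy.1, le_of_lt hy.2⟩
      rw [(hgderiv y hymem).deriv]
      have hay := hapos y hymem
      have hVy := hVnn y hymem
      have hiy := hineq y hymem
      have hry := haratio y hymem
      have hay' : a' y = (a' y / a y) * a y := by field_simp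
      have hexp : 0 < Real.exp (b * (y - t₀)) := Real.exp_pos _
      set r := a' y / a y with hr
      have key : V' y + b * V y + 2 * r * V y ≤ 0 := by linarith
      have h1 : (V' y * (a y) ^ 2 + V y * (2 * a y ^ 1 * a' y))
          + (V y * (a y) ^ 2) * b = (V' y + b * V y + 2 * r * V y) * (a y)^2 := by
        rw [hay']; ring
      have h2 : (V' y + b * V y + 2 * r * V y) * (a y)^2 ≤ 0 :=
        mul_nonpos_of_nonpos_of_nonneg key (sq_nonneg _)
      nlinarith [mul_nonpos_of_nonneg_of_nonpos (le_of_lt hexp) h2]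
  have hmono : g t ≤ g t₀ := hanti (Set.left_mem_Icc.mpr ht0) ⟨ht0, le_refl t⟩ ht0
  have hat : 0 < a t := hapos t ⟨ht0, htT⟩
  have hexp : 0 < Real.exp (b * (t - t₀)) := Real.exp_pos _
  have hz : (a t) ^ (-2 : ℤ) = ((a t) ^ 2)⁻¹ := by
    rw [zpow_neg, zpow_two, sq]
  rw [hz, show (-b * (t - t₀)) = -(b * (t - t₀)) by ring, Real.exp_neg]
  have hgt : g t = V t * (a t)^2 * Real.exp (b * (t - t₀)) := rfl
  have hgt0 : g t₀ = V t₀ * (a t₀)^2 * Real.exp (b * (t₀ - t₀)) := rfl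
  simp only [sub_self, mul_zero, Real.exp_zero, mul_one] at hgt0
  rw [hgt, hgt0] at hmono
  have hpos : 0 < a t ^ 2 * Real.exp (b * (t - t₀)) := by positivity
  have heq : ((a t) ^ 2)⁻¹ * (Real.exp (b * (t - t₀)))⁻¹ * (a t₀) ^ 2 * V t₀
      = (V t₀ * a t₀ ^ 2) / (a t ^ 2 * Real.exp (b * (t - t₀))) := by
    field_simp
  rw [heq, le_div_iff₀ hpos]
  nlinarith [hmono]
end

section
/- Let V : [t₀, T) → ℝ be differentiable and nonnegative and suppose V'(t) ≤ −b·V(t) − 2·(a'(t)/a(t))·V(t) on [t₀, T) where b > 0 and a : [t₀, T) → (0,∞) is differentiable with a(t) → ∞ as t → T⁻. Then V(t) → 0 as t → T⁻. -/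
open Filter

theorem prescribed_time_convergence
    (t₀ T b : ℝ) (hb : 0 < b) (ht : t₀ < T)
    (V V' a a' : ℝ → ℝ)
    (hV : ∀ t ∈ Set.Ico t₀ T, HasDerivAt V (V' t) t)
    (hVnn : ∀ t ∈ Set.Ico t₀ T, 0 ≤ V t)
    (ha : ∀ t ∈ Set.Ico t₀ T, HasDerivAt a (a' t) t)
    (hapos : ∀ t ∈ Set.Ico t₀ T, 0 < a t)
    (hblow : Filter.Tendsto a (nhdsWithin T (Set.Iio T)) Filter.atTop)
    (hineq : ∀ t ∈ Set.Ico t₀ T, V' t ≤ -b * V t - 2 * (a' t / a t) * V t) :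
    Filter.Tendsto V (nhdsWithin T (Set.Iio T)) (nhds 0) := by
  set W : ℝ → ℝ := fun t => a t ^ 2 * V t with hWdef
  have hWd : ∀ t ∈ Set.Ico t₀ T,
      HasDerivAt W (2 * a t * a' t * V t + a t ^ 2 * V' t) t := by
    intro t ht'
    have h1 := ((ha t ht').fun_pow 2).fun_mul (hV t ht')
    refine h1.congr_deriv ?_
    push_cast
    ring
  have hWd' : ∀ t ∈ Set.Ico t₀ T,
      2 * a t * a' t * V t + a t ^ 2 * V' t ≤ 0 := by
    intro t ht'
    have h := hineq t ht'
    have hap := hapos t ht'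
    have hvn := hVnn t ht'
    have h2 : a t ^ 2 * V' t ≤ a t ^ 2 * (-b * V t - 2 * (a' t / a t) * V t) :=
      mul_le_mul_of_nonneg_left h (sq_nonneg _)
    have h3 : a t ^ 2 * (-b * V t - 2 * (a' t / a t) * V t)
        = -(b * (a t ^ 2 * V t)) - 2 * a t * a' t * V t := by
      field_simp
    have h4 : 0 ≤ b * (a t ^ 2 * V t) := by positivity
    linarith
  have hanti : AntitoneOn W (Set.Ico t₀ T) := by
    apply antitoneOn_of_deriv_nonpos (convex_Ico t₀ T)
    · exact fun x hx => ((hWd x hx).continuousAt).continuousWithinAt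
    · intro x hx
      rw [interior_Ico] at hx
      exact ((hWd x ⟨hx.1.le, hx.2⟩).differentiableAt).differentiableWithinAt
    · intro x hx
      rw [interior_Ico] at hx
      have hx' : x ∈ Set.Ico t₀ T := ⟨le_of_lt hx.1, hx.2⟩
      rw [(hWd x hx').deriv]
      exact hWd' x hx'
  have hbound : ∀ t ∈ Set.Ico t₀ T, V t ≤ W t₀ / a t ^ 2 := by
    intro t ht'
    have hW0 : W t ≤ W t₀ := hanti (Set.left_mem_Ico.2 ht) ht' ht'.1
    have hap : 0 < a t ^ 2 := pow_pos (hapos t ht') 2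
    rw [le_div_iff₀ hap]
    calc V t * a t ^ 2 = W t := by simp [hWdef]; ring
    _ ≤ W t₀ := hW0
  have hmem : ∀ᶠ t in nhdsWithin T (Set.Iio T), t ∈ Set.Ico t₀ T := by
    filter_upwards [eventually_nhdsWithin_of_eventually_nhds
      (eventually_gt_nhds ht), self_mem_nhdsWithin] with t h1 h2
    exact ⟨le_of_lt h1, h2⟩
  have hsq : Tendsto (fun t => a t ^ 2) (nhdsWithin T (Set.Iio T)) atTop := by
    have := hblow.atTop_mul_atTop₀ hblow
    simpa [pow_two] using this
  have hupper : Tendsto (fun t => W t₀ / a t ^ 2) (nhdsWithin T (Set.Iio T)) (nhds 0) :=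
    Tendsto.div_atTop tendsto_const_nhds hsq
  refine tendsto_of_tendsto_of_tendsto_of_le_of_le' tendsto_const_nhds hupper ?_ ?_
  · filter_upwards [hmem] with t h using hVnn t h
  · filter_upwards [hmem] with t h using hbound t h
end
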